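/- Let N ≥ 1 and let Π ⊆ ℤ_{≥0}^N be finite and monotone, containing c·e^{(i)} for every i ∈ {1, …, N} for some integer c ≥ 1. Let Λ = {x ∈ ℝ_{≥0}^N : x_i < y_i for all i, for some y ∈ conv(Π)}. Then the closure of Λ in ℝ^N equals conv(Π). -/

import Mathlib

/-- for a finite monotone set `Π ⊆ ℤ_{≥0}^N` containing `c·e⁽ⁱ⁾`
for every `i` (for some integer `c ≥ 1`), the closure of the maximum capacity
region `Λ = {x ≥ 0 : x < y componentwise for some y ∈ conv(Π)}` equals
`conv(Π)`. -/
theorem closure_capacity_region_eq_convexHull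
    (N : ℕ) (hN : 1 ≤ N) (Sched : Set (Fin N → ℝ))
    (hfin : Sched.Finite)
    (hint : ∀ d ∈ Sched, ∀ i, ∃ m : ℕ, d i = (m : ℝ))
    (hmono : ∀ d ∈ Sched, ∀ d' : Fin N → ℝ,
      (∀ i, ∃ m : ℕ, d' i = (m : ℝ)) → d' ≤ d → d' ∈ Sched)
    (c : ℕ) (hc : 1 ≤ c)
    (hunit : ∀ i : Fin N, Pi.single i (c : ℝ) ∈ Sched) :
    closure {x : Fin N → ℝ | (∀ i, 0 ≤ x i) ∧
        ∃ y ∈ convexHull ℝ Sched, ∀ i, x i < y i}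
      = convexHull ℝ Sched := by
  classical
  set K := convexHull ℝ Sched with hK
  set Λ := {x : Fin N → ℝ | (∀ i, 0 ≤ x i) ∧
      ∃ y ∈ convexHull ℝ Sched, ∀ i, x i < y i} with hΛ
  -- every element of K is nonnegative
  have hKnonneg : ∀ y ∈ K, ∀ i, 0 ≤ y i := by
    intro y hy i
    have hconv : Convex ℝ {x : Fin N → ℝ | ∀ j, 0 ≤ x j} := by
      intro a ha b hb s t hs ht hst j
      exact add_nonneg (smul_nonneg hs (ha j)) (smul_nonneg ht (hb j))
    have hsub : Sched ⊆ {x : Fin N → ℝ | ∀ j, 0 ≤ x j} := by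
      intro d hd j
      obtain ⟨m, hm⟩ := hint d hd j
      rw [hm]; positivity
    exact convexHull_min hsub hconv hy i
  -- box lemma : 0 ≤ z ≤ d ∈ Sched implies z ∈ K
  have hbox : ∀ d ∈ Sched, ∀ z : Fin N → ℝ, (∀ i, 0 ≤ z i) → z ≤ d → z ∈ K := by
    intro d hd z hz0 hzd
    have hsub : Set.univ.pi (fun i => {t : ℝ | (∃ m : ℕ, t = (m : ℝ)) ∧ t ≤ d i})
        ⊆ Sched := by
      intro d' hd'
      exact hmono d hd d' (fun i => (hd' i (Set.mem_univ i)).1)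
        (fun i => (hd' i (Set.mem_univ i)).2)
    refine convexHull_mono hsub (mem_convexHull_pi ?_)
    intro i _
    obtain ⟨m, hm⟩ := hint d hd i
    have hceil : (⌈z i⌉₊ : ℝ) ≤ d i := by
      rw [hm]
      exact_mod_cast Nat.ceil_le.mpr (by rw [← hm]; exact hzd i)
    have hfl : ((⌊z i⌋₊ : ℝ)) ≤ d i := le_trans (Nat.floor_le (hz0 i)) (hzd i)
    have hmemseg : z i ∈ segment ℝ ((⌊z i⌋₊ : ℝ)) ((⌈z i⌉₊ : ℝ)) := by
      rw [segment_eq_Icc (by exact_mod_cast Nat.floor_le_ceil (z i))]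
      exact ⟨Nat.floor_le (hz0 i), Nat.le_ceil _⟩
    have hpair : ({((⌊z i⌋₊ : ℝ)), ((⌈z i⌉₊ : ℝ))} : Set ℝ)
        ⊆ {t : ℝ | (∃ m : ℕ, t = (m : ℝ)) ∧ t ≤ d i} := by
      rintro t (rfl | rfl)
      · exact ⟨⟨_, rfl⟩, hfl⟩
      · exact ⟨⟨_, rfl⟩, hceil⟩
    have hmemhull : z i ∈ convexHull ℝ ({((⌊z i⌋₊ : ℝ)), ((⌈z i⌉₊ : ℝ))} : Set ℝ) := by
      rw [convexHull_pair]; exact hmemseg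
    exact convexHull_mono hpair hmemhull
  -- downward closedness of K on the nonnegative orthant
  have hdown : ∀ y ∈ K, ∀ x : Fin N → ℝ, (∀ i, 0 ≤ x i) → x ≤ y → x ∈ K := by
    intro y hy x hx0 hxy
    rw [hK, hfin.convexHull_eq] at hy
    obtain ⟨w, hw0, hw1, hwy⟩ := hy
    rw [Finset.centerMass_eq_of_sum_1 _ _ hw1] at hwy
    set θ : Fin N → ℝ := fun i => if y i = 0 then 0 else x i / y i with hθ
    have hθ01 : ∀ i, 0 ≤ θ i ∧ θ i ≤ 1 := by
      intro i
      by_cases h : y i = 0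
      · simp [hθ, h]
      · have hyi : 0 < y i := lt_of_le_of_ne (le_trans (hx0 i) (hxy i)) (Ne.symm h)
        refine ⟨?_, ?_⟩
        · simp only [hθ, if_neg h]
          exact div_nonneg (hx0 i) hyi.le
        · simp only [hθ, if_neg h]
          exact (div_le_one hyi).mpr (hxy i)
    have hdnn : ∀ d ∈ hfin.toFinset, ∀ i, (0 : ℝ) ≤ d i := by
      intro d hd i
      obtain ⟨m, hm⟩ := hint d (hfin.mem_toFinset.mp hd) i
      rw [hm]; positivity
    have hz : ∀ d ∈ hfin.toFinset, (fun i => θ i * d i) ∈ K := by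
      intro d hd
      refine hbox d (hfin.mem_toFinset.mp hd) _
        (fun i => mul_nonneg (hθ01 i).1 (hdnn d hd i)) (fun i => ?_)
      calc θ i * d i ≤ 1 * d i :=
            mul_le_mul_of_nonneg_right (hθ01 i).2 (hdnn d hd i)
        _ = d i := one_mul _
    have hyi : ∀ i, y i = ∑ d ∈ hfin.toFinset, w d * d i := by
      intro i
      rw [← hwy]
      simp [Finset.sum_apply]
    have hxe : x = ∑ d ∈ hfin.toFinset, w d • (fun i => θ i * d i) := by
      funext i
      rw [Finset.sum_apply]
      simp only [Pi.smul_apply, smul_eq_mul]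
      have hswap : ∑ d ∈ hfin.toFinset, w d * (θ i * d i)
          = θ i * ∑ d ∈ hfin.toFinset, w d * d i := by
        rw [Finset.mul_sum]
        exact Finset.sum_congr rfl (fun d _ => by ring)
      rw [hswap, ← hyi i]
      by_cases h : y i = 0
      · have hx0i : x i = 0 := le_antisymm (h ▸ hxy i) (hx0 i)
        simp [hθ, h, hx0i]
      · simp only [hθ, if_neg h]
        field_simp
    rw [hxe]
    exact (convex_convexHull ℝ Sched).sum_mem
      (fun d hd => hw0 d (hfin.mem_toFinset.mp hd)) hw1 hz
  have hclosed : IsClosed K := (hfin.isCompact_convexHull (𝕜 := ℝ)).isClosed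
  -- Λ ⊆ K
  have hsub : Λ ⊆ K := by
    rintro x ⟨hx0, y, hy, hlt⟩
    exact hdown y hy x hx0 (fun i => (hlt i).le)
  -- the positive point u
  set u : Fin N → ℝ := ∑ i : Fin N, ((N : ℝ)⁻¹) • (Pi.single i (c : ℝ) : Fin N → ℝ) with hu_def
  have hNpos : (0 : ℝ) < N := by exact_mod_cast hN
  have hu : u ∈ K := by
    refine (convex_convexHull ℝ Sched).sum_mem (fun i _ => by positivity) ?_
      (fun i _ => subset_convexHull ℝ Sched (hunit i))
    rw [Finset.sum_const, Finset.card_univ, Fintype.card_fin, nsmul_eq_mul]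
    field_simp
  have hupos : ∀ i, 0 < u i := by
    intro i
    have : u i = (N : ℝ)⁻¹ * c := by
      rw [hu_def, Finset.sum_apply]
      simp [Pi.single_apply]
    rw [this]
    have hcpos : (0 : ℝ) < c := by exact_mod_cast hc
    positivity
  refine subset_antisymm (closure_minimal hsub hclosed) ?_
  intro y hy
  have hmem : ∀ n : ℕ, (1 - ((n : ℝ) + 1)⁻¹) • y ∈ Λ := by
    intro n
    set ε : ℝ := ((n : ℝ) + 1)⁻¹ with hε_def
    have hε0 : 0 < ε := by positivity
    have hε1 : ε ≤ 1 := by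
      rw [hε_def]
      rw [inv_le_one_iff₀]
      right; linarith [Nat.cast_nonneg (α := ℝ) n]
    refine ⟨fun i => ?_, ?_⟩
    · simp only [Pi.smul_apply, smul_eq_mul]
      exact mul_nonneg (by linarith) (hKnonneg y hy i)
    refine ⟨(1 - ε) • y + ε • u, ?_, ?_⟩
    · exact (convex_convexHull ℝ Sched) hy hu (by linarith) hε0.le (by ring)
    · intro i
      show ((1 - ε) • y) i < ((1 - ε) • y + ε • u) i
      simp only [Pi.add_apply, Pi.smul_apply, smul_eq_mul]
      have := mul_pos hε0 (hupos i)
      linarith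
  have htend : Filter.Tendsto (fun n : ℕ => (1 - ((n : ℝ) + 1)⁻¹) • y)
      Filter.atTop (nhds y) := by
    have h0 : Filter.Tendsto (fun n : ℕ => ((n : ℝ) + 1)⁻¹) Filter.atTop (nhds 0) := by
      simpa [one_div] using tendsto_one_div_add_atTop_nhds_zero_nat (𝕜 := ℝ)
    have h1 : Filter.Tendsto (fun n : ℕ => (1 - ((n : ℝ) + 1)⁻¹)) Filter.atTop (nhds 1) := by
      simpa using Filter.Tendsto.const_sub 1 h0
    simpa using h1.smul_const y
  exact mem_closure_of_tendsto htend (Filter.Eventually.of_forall hmem)
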